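/- If real numbers d_1,...,d_s satisfy sum_{i=1}^s d_i / (1 + exp(-(x - μ_i)/σ)) = 0 identically in x ∈ ℝ, where σ > 0 is a common scale and μ_1,...,μ_s are pairwise distinct reals, then all d_i = 0. -/

import Mathlib

open Polynomial Finset

theorem logistic_combination_zero_common_scale
    (s : ℕ) (d μ : Fin s → ℝ) (σ : ℝ)
    (hσ : 0 < σ)
    (hμ : Function.Injective μ)
    (h : ∀ x : ℝ, ∑ i, d i / (1 + Real.exp (-(x - μ i) / σ)) = 0) :
    ∀ i, d i = 0 := by
  set a : Fin s → ℝ := fun i => Real.exp (μ i / σ) with ha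
  have hapos : ∀ i, 0 < a i := fun i => Real.exp_pos _
  have hainj : Function.Injective a := by
    intro i j hij
    apply hμ
    have := Real.exp_injective hij
    field_simp at this
    exact this
  -- Step 1: rational identity
  have key : ∀ t : ℝ, 0 < t → ∑ i, d i / (t + a i) = 0 := by
    intro t ht
    have hx := h (σ * Real.log t)
    have hterm : ∀ i, d i / (1 + Real.exp (-(σ * Real.log t - μ i) / σ))
        = t * (d i / (t + a i)) := by
      intro i
      have he : Real.exp (-(σ * Real.log t - μ i) / σ) = a i / t := by
        rw [ha]
        rw [show -(σ * Real.log t - μ i) / σ = μ i / σ - Real.log t by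
          field_simp; ring]
        rw [Real.exp_sub, Real.exp_log ht]
      rw [he]
      have h1 : 1 + a i / t = (t + a i) / t := by field_simp
      rw [h1, div_div_eq_mul_div]
      have hta : t + a i ≠ 0 := by positivity
      field_simp
    rw [Finset.sum_congr rfl (fun i _ => hterm i), ← Finset.mul_sum] at hx
    exact (mul_eq_zero.1 hx).resolve_left (ne_of_gt ht)
  -- Step 2: polynomial
  set P : Polynomial ℝ :=
    ∑ i, Polynomial.C (d i) * ∏ k ∈ Finset.univ.erase i, (Polynomial.X + Polynomial.C (a k)) with hP
  have hPeval : ∀ t : ℝ, P.eval t = ∑ i, d i * ∏ k ∈ Finset.univ.erase i, (t + a k) := by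
    intro t
    simp [hP, Polynomial.eval_finset_sum, Polynomial.eval_prod]
  have hProots : ∀ t : ℝ, 0 < t → P.eval t = 0 := by
    intro t ht
    rw [hPeval]
    have : ∀ i ∈ Finset.univ, d i * ∏ k ∈ Finset.univ.erase i, (t + a k)
        = (d i / (t + a i)) * ∏ k, (t + a k) := by
      intro i _
      rw [← Finset.mul_prod_erase Finset.univ _ (Finset.mem_univ i)]
      have hta : t + a i ≠ 0 := by positivity
      field_simp
    rw [Finset.sum_congr rfl this, ← Finset.sum_mul, key t ht, zero_mul]
  have hP0 : P = 0 := by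
    apply Polynomial.eq_zero_of_infinite_isRoot
    apply Set.Infinite.mono (s := Set.Ioi (0:ℝ))
    · intro t ht; exact hProots t ht
    · exact Set.Ioi_infinite 0
  intro j
  have hev : P.eval (-(a j)) = 0 := by rw [hP0]; simp
  rw [hPeval] at hev
  rw [Finset.sum_eq_single j] at hev
  · have hne : ∏ k ∈ Finset.univ.erase j, (-(a j) + a k) ≠ 0 := by
      apply Finset.prod_ne_zero_iff.2
      intro k hk
      have : a k ≠ a j := fun hc => (Finset.mem_erase.1 hk).1 (hainj hc)
      intro hc
      apply this
      linarith [hc]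
    exact (mul_eq_zero.1 hev).resolve_right hne
  · intro i _ hij
    apply mul_eq_zero_of_right
    apply Finset.prod_eq_zero (Finset.mem_erase.2 ⟨Ne.symm hij, Finset.mem_univ j⟩)
    ring
  · intro hj; exact absurd (Finset.mem_univ j) hj
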